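/- Let x ∈ A satisfy v_{ρ,σ}(x) ≥ ρ + σ for every pair (ρ,σ) of relatively prime positive integers, and suppose x has adjacent edges E_{ρ₁,σ₁}(x) and E_{ρ₂,σ₂}(x), where (ρ₁,σ₁), (ρ₂,σ₂) are pairs of relatively prime positive integers with ρ₁/σ₁ ≠ ρ₂/σ₂. If x is solvable and y ∈ A satisfies [x, y] = 1, then E_{ρ₁,σ₁}(y) and E_{ρ₂,σ₂}(y) are adjacent edges of y. (Lemma 5.4) -/

import Mathlib

open scoped BigOperators

/-- Defining relation of the Weyl algebra: `p * q = q * p + 1`. -/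
inductive WeylRel (F : Type*) [CommRing F] :
    FreeAlgebra F (Fin 2) → FreeAlgebra F (Fin 2) → Prop
  | comm : WeylRel F (FreeAlgebra.ι F 0 * FreeAlgebra.ι F 1)
      (FreeAlgebra.ι F 1 * FreeAlgebra.ι F 0 + 1)

/-- The Weyl algebra over `F`. -/
abbrev WeylAlgebra (F : Type*) [CommRing F] := RingQuot (WeylRel F)

variable (F : Type*) [Field F] [CharZero F]

/-- The generator `p` of the Weyl algebra. -/
noncomputable def Wp : WeylAlgebra F :=
  RingQuot.mkAlgHom F (WeylRel F) (FreeAlgebra.ι F 0)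

/-- The generator `q` of the Weyl algebra. -/
noncomputable def Wq : WeylAlgebra F :=
  RingQuot.mkAlgHom F (WeylRel F) (FreeAlgebra.ι F 1)

/-- `x` is solvable if `[x, y] = 1` for some `y`. -/
def Solvable (x : WeylAlgebra F) : Prop := ∃ y : WeylAlgebra F, x * y - y * x = 1

/-- The centralizer `C(x)`. -/
def Cset (x : WeylAlgebra F) : Set (WeylAlgebra F) := {y | x * y - y * x = 0}

/-- `N(x) = {y | (ad x)^n y = 0 for some n ≥ 1}`. -/
def Nset (x : WeylAlgebra F) : Set (WeylAlgebra F) :=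
  {y | ∃ n : ℕ, 1 ≤ n ∧ (fun z => x * z - z * x)^[n] y = 0}

/-- `D(x) = {y | [x,y] = λ y for some scalar λ}`. -/
def Dset (x : WeylAlgebra F) : Set (WeylAlgebra F) :=
  {y | ∃ c : F, x * y - y * x = c • y}

def Delta1 : Set (WeylAlgebra F) :=
  {x | x ∉ Set.range (algebraMap F (WeylAlgebra F)) ∧
    Nset F x = Set.univ ∧ Dset F x = Cset F x}

def Delta2 : Set (WeylAlgebra F) :=
  {x | x ∉ Set.range (algebraMap F (WeylAlgebra F)) ∧
    Nset F x ≠ Set.univ ∧ Nset F x ≠ Cset F x ∧ Dset F x = Cset F x}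

/-- The graded component `A_s = {a | [pq, a] = s • a}`. -/
def Wgrade (s : ℤ) : Set (WeylAlgebra F) :=
  {a | (Wp F * Wq F) * a - a * (Wp F * Wq F) = s • a}

/-- The monomial `p^i q^j`. -/
noncomputable def Wmono (i j : ℕ) : WeylAlgebra F := Wp F ^ i * Wq F ^ j

/-- `α` is the coordinate family of `x` in the basis `p^i q^j`. -/
def Represents (α : (ℕ × ℕ) →₀ F) (x : WeylAlgebra F) : Prop :=
  x = α.sum fun ij c => c • Wmono F ij.1 ij.2

/-- `v_{ρ,σ}(x) = max { iρ + jσ | (i,j) ∈ E(x) }`. -/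
def vdeg (α : (ℕ × ℕ) →₀ F) (ρ σ : ℕ) : ℕ :=
  α.support.sup fun ij => ij.1 * ρ + ij.2 * σ

/-- `E_{ρ,σ}(x)`. -/
def Eset (α : (ℕ × ℕ) →₀ F) (ρ σ : ℕ) : Finset (ℕ × ℕ) :=
  α.support.filter fun ij => ij.1 * ρ + ij.2 * σ = vdeg F α ρ σ

/-- The `(ρ,σ)`-polynomial of `x`, an element of `F[X,Y]`. -/
noncomputable def wpoly (α : (ℕ × ℕ) →₀ F) (ρ σ : ℕ) : MvPolynomial (Fin 2) F :=
  ∑ ij ∈ Eset F α ρ σ,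
    MvPolynomial.monomial (Finsupp.single 0 ij.1 + Finsupp.single 1 ij.2) (α ij)

/-- The `(ρ,σ)`-term of `x`, an element of the Weyl algebra. -/
noncomputable def wterm (α : (ℕ × ℕ) →₀ F) (ρ σ : ℕ) : WeylAlgebra F :=
  ∑ ij ∈ Eset F α ρ σ, α ij • Wmono F ij.1 ij.2

-- Section 1 : representation on F[X]

noncomputable def WD : Module.End F (Polynomial F) := Polynomial.derivative
noncomputable def WX : Module.End F (Polynomial F) :=
  LinearMap.mulLeft F (Polynomial.X : Polynomial F)

noncomputable def Wpre : FreeAlgebra F (Fin 2) →ₐ[F] Module.End F (Polynomial F) :=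
  FreeAlgebra.lift F ![WD F, WX F]

theorem Wpre_rel : ∀ ⦃a b : FreeAlgebra F (Fin 2)⦄, WeylRel F a b → Wpre F a = Wpre F b := by
  rintro a b ⟨⟩
  simp only [map_mul, map_add, map_one, Wpre, FreeAlgebra.lift_ι_apply,
    Matrix.cons_val_zero, Matrix.cons_val_one, Matrix.head_cons]
  refine LinearMap.ext fun p => ?_
  simp only [Module.End.mul_apply, LinearMap.add_apply, Module.End.one_apply, WD, WX,
    LinearMap.mulLeft_apply, Polynomial.derivative_mul, Polynomial.derivative_X, one_mul]
  ring

noncomputable def Wrep : WeylAlgebra F →ₐ[F] Module.End F (Polynomial F) :=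
  RingQuot.liftAlgHom F ⟨Wpre F, Wpre_rel F⟩

@[simp] theorem Wrep_p : Wrep F (Wp F) = WD F := by
  simp [Wrep, Wp, RingQuot.liftAlgHom_mkAlgHom_apply, Wpre, FreeAlgebra.lift_ι_apply]

@[simp] theorem Wrep_q : Wrep F (Wq F) = WX F := by
  simp [Wrep, Wq, RingQuot.liftAlgHom_mkAlgHom_apply, Wpre, FreeAlgebra.lift_ι_apply]

theorem WX_pow (j : ℕ) (p : Polynomial F) : ((WX F) ^ j) p = Polynomial.X ^ j * p := by
  induction j with
  | zero => simp
  | succ n ih =>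
      rw [pow_succ', Module.End.mul_apply, ih]
      simp [WX, pow_succ', mul_assoc, mul_comm, mul_left_comm]

theorem WD_pow (i : ℕ) (p : Polynomial F) :
    ((WD F) ^ i) p = Polynomial.derivative^[i] p :=
  Module.End.pow_apply _ i p

theorem Wrep_mono (i j n : ℕ) :
    (Wrep F (Wmono F i j)) (Polynomial.X ^ n) =
      ((n + j).descFactorial i : F) • Polynomial.X ^ (n + j - i) := by
  simp only [Wmono, map_mul, map_pow, Wrep_p, Wrep_q]
  rw [Module.End.mul_apply, WX_pow, WD_pow, ← pow_add]
  rw [show j + n = n + j by ring]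
  exact Polynomial.iterate_derivative_X_pow_eq_smul (n + j) i

theorem cast_descFactorial_eq_prod (n j i : ℕ) (h : i ≤ n) :
    (((n + j).descFactorial i : ℕ) : F) = ∏ r ∈ Finset.range i, ((n : F) + j - r) := by
  rw [Nat.descFactorial_eq_prod_range, Nat.cast_prod]
  refine Finset.prod_congr rfl fun r hr => ?_
  rw [Finset.mem_range] at hr
  have hr' : r ≤ n + j := le_trans (le_of_lt (lt_of_lt_of_le hr h)) (Nat.le_add_right n j)
  rw [Nat.cast_sub hr']
  push_cast; ring

theorem Wmono_indep (s : Finset (ℕ × ℕ)) (c : ℕ × ℕ → F)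
    (h : ∑ ij ∈ s, c ij • Wmono F ij.1 ij.2 = 0) : ∀ ij ∈ s, c ij = 0 := by
  classical
  by_contra hcon
  push_neg at hcon
  obtain ⟨ij₀, hij₀s, hij₀⟩ := hcon
  set s' : Finset (ℕ × ℕ) := s.filter (fun ij => c ij ≠ 0) with hs'
  have hsum' : ∑ ij ∈ s', c ij • Wmono F ij.1 ij.2 = 0 := by
    rw [hs', Finset.sum_filter_of_ne]; · exact h
    · intro x hx hfx
      intro hcx; exact hfx (by rw [hcx, zero_smul])
  have hij₀s' : ij₀ ∈ s' := by rw [hs', Finset.mem_filter]; exact ⟨hij₀s, hij₀⟩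
  set t : Finset (ℕ × ℕ) := s'.filter (fun ij => ij.2 + ij₀.1 = ij.1 + ij₀.2) with ht
  have hij₀t : ij₀ ∈ t := by rw [ht, Finset.mem_filter]; exact ⟨hij₀s', Nat.add_comm _ _⟩
  obtain ⟨b, hbt, hbmax⟩ := Finset.exists_max_image t (fun ij => ij.1) ⟨ij₀, hij₀t⟩
  have hbs' : b ∈ s' := (Finset.mem_filter.1 hbt).1
  have hbclass : b.2 + ij₀.1 = b.1 + ij₀.2 := (Finset.mem_filter.1 hbt).2
  set I := b.1 with hI
  set J := b.2 with hJ
  -- class membership characterization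
  have hclass : ∀ ij : ℕ × ℕ, ij ∈ s' → ((ij.2 + I = ij.1 + J) ↔ ij ∈ t) := by
    intro ij _hmem
    rw [ht, Finset.mem_filter]
    constructor
    · intro hc; exact ⟨_hmem, by omega⟩
    · rintro ⟨-, hc⟩; omega
  set n₀ : ℕ := (s'.sup fun ij => ij.1) + I with hn₀
  -- evaluate coefficients
  have hn : ∀ n : ℕ, n₀ ≤ n →
      ∑ ij ∈ s', c ij * (((n + ij.2).descFactorial ij.1 : ℕ) : F) *
        (if ij ∈ t then 1 else 0) = 0 := by
    intro n hnn
    have h1 := congrArg (fun z => ((Wrep F z) (Polynomial.X ^ n)).coeff (n + J - I)) hsum'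
    simp only [map_sum, map_zero, LinearMap.coe_sum, Finset.sum_apply,
      Polynomial.finset_sum_coeff, map_smul, LinearMap.smul_apply,
      Polynomial.coeff_smul, LinearMap.zero_apply, Polynomial.coeff_zero] at h1
    refine Eq.trans (Finset.sum_congr rfl fun ij hij => ?_) h1
    have hile : ij.1 ≤ n := le_trans (le_trans (Finset.le_sup hij) (Nat.le_add_right _ I)) hnn
    have hIle : I ≤ n := le_trans (Nat.le_add_left I _) hnn
    rw [Wrep_mono, Polynomial.coeff_smul, Polynomial.coeff_X_pow, smul_eq_mul, smul_eq_mul]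
    have hiff : (n + J - I = n + ij.2 - ij.1) ↔ (ij ∈ t) := by
      rw [← hclass ij hij]; omega
    simp only [hiff]; ring
  -- the interpolating polynomial
  set p : Polynomial F := ∑ ij ∈ t, Polynomial.C (c ij) *
      ∏ r ∈ Finset.range ij.1, (Polynomial.X + Polynomial.C ((ij.2 : F) - r)) with hp
  have heval : ∀ n : ℕ, n₀ ≤ n → p.IsRoot ((n : ℕ) : F) := by
    intro n hnn
    have hn' := hn n hnn
    simp only [mul_ite, mul_one, mul_zero] at hn'
    rw [← Finset.sum_filter] at hn'
    have hteq : s'.filter (fun ij => ij ∈ t) = t := by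
      ext ij
      simp only [Finset.mem_filter]
      constructor
      · rintro ⟨-, h2⟩; exact h2
      · intro h2; exact ⟨(Finset.mem_filter.1 h2).1, h2⟩
    rw [hteq] at hn'
    rw [Polynomial.IsRoot, hp, Polynomial.eval_finset_sum, ← hn']
    refine Finset.sum_congr rfl fun ij hij => ?_
    have hile : ij.1 ≤ n :=
      le_trans (le_trans (Finset.le_sup (Finset.mem_filter.1 hij).1) (Nat.le_add_right _ I)) hnn
    rw [Polynomial.eval_mul, Polynomial.eval_C, Polynomial.eval_prod]
    rw [cast_descFactorial_eq_prod F n ij.2 ij.1 hile]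
    refine congrArg _ (Finset.prod_congr rfl fun r hr => ?_)
    simp [sub_eq_add_neg, add_assoc]
  have hp0 : p = 0 := by
    refine Polynomial.eq_zero_of_infinite_isRoot p ?_
    refine Set.infinite_of_injective_forall_mem
      (f := fun k : ℕ => ((n₀ + k : ℕ) : F)) ?_ ?_
    · intro a b' hab
      have := Nat.cast_injective (R := F) hab
      omega
    · intro k
      exact heval (n₀ + k) (Nat.le_add_right _ _)
  -- extract coefficient I
  have hcoeff : p.coeff I = c b := by
    rw [hp, Polynomial.finset_sum_coeff]
    have hmono : ∀ ij : ℕ × ℕ,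
        (∏ r ∈ Finset.range ij.1, (Polynomial.X + Polynomial.C ((ij.2 : F) - r))).Monic := by
      intro ij
      exact Polynomial.monic_prod_of_monic _ _ fun r _ => Polynomial.monic_X_add_C _
    have hdeg : ∀ ij : ℕ × ℕ,
        (∏ r ∈ Finset.range ij.1, (Polynomial.X + Polynomial.C ((ij.2 : F) - r))).natDegree
          = ij.1 := by
      intro ij
      rw [Polynomial.natDegree_prod_of_monic _ _ fun r _ => Polynomial.monic_X_add_C _]
      rw [Finset.sum_congr rfl fun r _ => Polynomial.natDegree_X_add_C _]
      simp
    rw [Finset.sum_eq_single_of_mem b hbt]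
    · have h1 : (∏ r ∈ Finset.range b.1,
          (Polynomial.X + Polynomial.C ((b.2 : F) - r))).coeff I = 1 := by
        have h2 := (hmono b).coeff_natDegree
        rwa [hdeg b] at h2
      rw [Polynomial.coeff_C_mul, h1, mul_one]
    · intro ij hijt hijne
      have hlt : ij.1 < I := by
        have hle := hbmax ij hijt
        rcases lt_or_eq_of_le hle with hlt | heq
        · exact hlt
        · exfalso
          have hc2 : ij.2 + ij₀.1 = ij.1 + ij₀.2 := (Finset.mem_filter.1 hijt).2
          have : ij.2 = J := by omega
          exact hijne (Prod.ext heq this)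
      refine Polynomial.coeff_eq_zero_of_natDegree_lt ?_
      calc (Polynomial.C (c ij) * _).natDegree ≤ _ := Polynomial.natDegree_C_mul_le _ _
        _ < I := by rw [hdeg ij]; exact hlt
  rw [hp0, Polynomial.coeff_zero] at hcoeff
  exact (Finset.mem_filter.1 hbs').2 hcoeff.symm

-- Section 2 : structure constants

noncomputable def EcoefAux (b : ℕ) : ℕ → ℕ → F
  | 0, 0 => 1
  | 0, _+1 => 0
  | _+1, 0 => 1
  | c+1, k+1 => EcoefAux b c (k+1) - ((b - k : ℕ) : F) * EcoefAux b c k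

noncomputable def Ecoef (b k c : ℕ) : F := EcoefAux F b c k

@[simp] theorem Ecoef_zero (b c : ℕ) : Ecoef F b 0 c = 1 := by
  cases c <;> rfl

theorem Ecoef_succ (b k c : ℕ) :
    Ecoef F b (k+1) (c+1) = Ecoef F b (k+1) c - ((b - k : ℕ) : F) * Ecoef F b k c := rfl

@[simp] theorem Ecoef_succ_zero (b k : ℕ) : Ecoef F b (k+1) 0 = 0 := rfl

theorem Ecoef_eq_zero {b k c : ℕ} (h : min b c < k) : Ecoef F b k c = 0 := by
  induction c generalizing k with
  | zero =>
      match k, h with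
      | k+1, _ => rfl
  | succ c ih =>
      match k, h with
      | k+1, h =>
          rw [Ecoef_succ]
          have h1 : min b c < k + 1 := by omega
          rw [ih h1]
          by_cases h2 : min b c < k
          · rw [ih h2, mul_zero, sub_zero]
          · have hb : b = k := by omega
            rw [hb, Nat.sub_self, Nat.cast_zero, zero_mul, sub_zero]

theorem Ecoef_one (b c : ℕ) : Ecoef F b 1 c = -((b * c : ℕ) : F) := by
  induction c with
  | zero => simp
  | succ c ih =>
      rw [Ecoef_succ, ih, Ecoef_zero, Nat.sub_zero, mul_one]
      push_cast
      ring

theorem wrel : Wp F * Wq F = Wq F * Wp F + 1 := by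
  have h := RingQuot.mkAlgHom_rel F (WeylRel.comm (F := F))
  simpa only [map_mul, map_add, map_one, Wp, Wq] using h

theorem wrel' : Wq F * Wp F = Wp F * Wq F - 1 := by
  rw [wrel, add_sub_cancel_right]

theorem qp_pow (m : ℕ) :
    Wq F ^ (m+1) * Wp F = Wp F * Wq F ^ (m+1) - ((m+1 : ℕ) : F) • Wq F ^ m := by
  induction m with
  | zero =>
      simpa using wrel' F
  | succ m ih =>
      have h0 : Wq F ^ (m+2) * Wp F = Wq F * (Wq F ^ (m+1) * Wp F) := by
        rw [← mul_assoc, ← pow_succ']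
      rw [h0, ih, mul_sub, mul_smul_comm, ← mul_assoc, wrel', sub_mul, one_mul,
        ← pow_succ', mul_assoc, ← pow_succ']
      push_cast
      module

theorem qp_pow' (m : ℕ) :
    Wq F ^ m * Wp F = Wp F * Wq F ^ m - ((m : ℕ) : F) • Wq F ^ (m - 1) := by
  cases m with
  | zero => simp
  | succ m => simpa using qp_pow F m

theorem qbpc (b c : ℕ) :
    Wq F ^ b * Wp F ^ c =
      ∑ k ∈ Finset.range (c+1), Ecoef F b k c • (Wp F ^ (c - k) * Wq F ^ (b - k)) := by
  induction c with
  | zero => simp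
  | succ c ih =>
      have step : Wq F ^ b * Wp F ^ (c+1) = (Wq F ^ b * Wp F ^ c) * Wp F := by
        rw [mul_assoc, ← pow_succ]
      rw [step, ih, Finset.sum_mul]
      have term : ∀ k, Ecoef F b k c • (Wp F ^ (c - k) * Wq F ^ (b - k)) * Wp F =
          Ecoef F b k c • (Wp F ^ (c - k + 1) * Wq F ^ (b - k))
          - (((b - k : ℕ) : F) * Ecoef F b k c) • (Wp F ^ (c - k) * Wq F ^ (b - k - 1)) := by
        intro k
        rw [smul_mul_assoc, mul_assoc, qp_pow' F (b - k)]
        rw [mul_sub, mul_smul_comm, smul_sub, smul_smul]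
        have hpp : Wp F ^ (c - k) * (Wp F * Wq F ^ (b - k)) =
            Wp F ^ (c - k + 1) * Wq F ^ (b - k) := by
          rw [← mul_assoc, ← pow_succ]
        rw [hpp, mul_comm (Ecoef F b k c)]
      rw [Finset.sum_congr rfl fun k _ => term k, Finset.sum_sub_distrib]
      rw [Finset.sum_range_succ' _ (c+1)]
      have hsplit : ∀ k ∈ Finset.range (c+1),
          Ecoef F b (k+1) (c+1) • (Wp F ^ (c + 1 - (k+1)) * Wq F ^ (b - (k+1))) =
          Ecoef F b (k+1) c • (Wp F ^ (c - k) * Wq F ^ (b - k - 1))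
          - (((b - k : ℕ) : F) * Ecoef F b k c) • (Wp F ^ (c - k) * Wq F ^ (b - k - 1)) := by
        intro k hk
        rw [Finset.mem_range] at hk
        rw [Ecoef_succ, show c + 1 - (k+1) = c - k from by omega,
          show b - (k+1) = b - k - 1 from by omega]
        exact sub_smul (Ecoef F b (k+1) c) (((b - k : ℕ) : F) * Ecoef F b k c) (Wp F ^ (c - k) * Wq F ^ (b - k - 1))
      rw [Finset.sum_congr rfl hsplit, Finset.sum_sub_distrib]
      have hS1 : ∑ k ∈ Finset.range (c+1),
            Ecoef F b k c • (Wp F ^ (c - k + 1) * Wq F ^ (b - k)) =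
          (∑ k ∈ Finset.range (c+1),
            Ecoef F b (k+1) c • (Wp F ^ (c - k) * Wq F ^ (b - k - 1)))
          + Wp F ^ (c + 1) * Wq F ^ b := by
        rw [Finset.sum_range_succ' _ c]
        congr 1
        · rw [Finset.sum_range_succ, Ecoef_eq_zero F (show min b c < c+1 from by omega),
            zero_smul, add_zero]
          refine Finset.sum_congr rfl fun k hk => ?_
          rw [Finset.mem_range] at hk
          rw [show c - (k+1) + 1 = c - k from by omega,
            show b - (k+1) = b - k - 1 from by omega]
        · rw [Ecoef_zero, one_smul, Nat.sub_zero, Nat.sub_zero]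
      rw [hS1, Ecoef_zero, one_smul, Nat.sub_zero, Nat.sub_zero]
      abel

theorem Wmono_mul (a b c d K : ℕ) (hK : c < K) :
    Wmono F a b * Wmono F c d =
      ∑ k ∈ Finset.range K, Ecoef F b k c • Wmono F (a + c - k) (b + d - k) := by
  have base : Wmono F a b * Wmono F c d =
      ∑ k ∈ Finset.range (c+1), Ecoef F b k c • Wmono F (a + c - k) (b + d - k) := by
    have h1 : Wmono F a b * Wmono F c d =
        Wp F ^ a * (Wq F ^ b * Wp F ^ c) * Wq F ^ d := by
      rw [Wmono, Wmono, mul_assoc, ← mul_assoc (Wq F ^ b), ← mul_assoc]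
    rw [h1, qbpc, Finset.mul_sum, Finset.sum_mul]
    refine Finset.sum_congr rfl fun k hk => ?_
    rw [Finset.mem_range] at hk
    rw [mul_smul_comm, smul_mul_assoc]
    by_cases h : min b c < k
    · rw [Ecoef_eq_zero F h, zero_smul, zero_smul]
    · congr 1
      rw [Wmono, ← mul_assoc, ← pow_add, mul_assoc, ← pow_add]
      rw [show a + (c - k) = a + c - k from by omega,
        show b - k + d = b + d - k from by omega]
  rw [base]
  refine Finset.sum_subset ?_ ?_
  · intro k hk
    rw [Finset.mem_range] at *
    omega
  · intro k hk hnk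
    rw [Finset.mem_range] at hnk
    rw [Ecoef_eq_zero F (show min b c < k from by omega), zero_smul]

-- Section 3 : coefficient identity for [x,y] = 1

theorem Wmono_zero_zero : Wmono F 0 0 = 1 := by
  rw [Wmono, pow_zero, pow_zero, one_mul]

theorem sum_mono_coeff {ι : Type*} (T : Finset ι) (f : ι → F) (g : ι → ℕ × ℕ)
    (h : ∑ t ∈ T, f t • Wmono F (g t).1 (g t).2 = 0) :
    ∀ ij : ℕ × ℕ, ∑ t ∈ T, (if g t = ij then f t else 0) = 0 := by
  classical
  intro ij
  rw [← Finset.sum_filter]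
  by_cases hij : ij ∈ T.image g
  · have key : ∑ ij' ∈ T.image g,
        (∑ t ∈ T.filter (fun t => g t = ij'), f t) • Wmono F ij'.1 ij'.2 = 0 := by
      rw [← h]
      rw [← Finset.sum_fiberwise_of_maps_to (g := g) (fun x hx => Finset.mem_image_of_mem g hx)
        (f := fun t => f t • Wmono F (g t).1 (g t).2)]
      refine Finset.sum_congr rfl fun ij' _ => ?_
      rw [Finset.sum_smul]
      refine Finset.sum_congr rfl fun t ht => ?_
      rw [(Finset.mem_filter.1 ht).2]
    exact Wmono_indep F (T.image g) _ key ij hij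
  · rw [Finset.filter_eq_empty_iff.2, Finset.sum_empty]
    intro t ht hgt
    exact hij (hgt ▸ Finset.mem_image_of_mem g ht)

theorem sum_mono_coeff_one {ι : Type*} (T : Finset ι) (f : ι → F) (g : ι → ℕ × ℕ)
    (h : ∑ t ∈ T, f t • Wmono F (g t).1 (g t).2 = 1) :
    ∀ ij : ℕ × ℕ, ∑ t ∈ T, (if g t = ij then f t else 0) =
      if ij = ((0, 0) : ℕ × ℕ) then 1 else 0 := by
  classical
  intro ij
  set T' : Finset (Option ι) := insert none (T.map Function.Embedding.some) with hT'
  set f' : Option ι → F := fun t => t.elim (-1) f with hf'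
  set g' : Option ι → ℕ × ℕ := fun t => t.elim (0, 0) g with hg'
  have hnone : (none : Option ι) ∉ T.map Function.Embedding.some := by
    simp
  have h0 : ∑ t ∈ T', f' t • Wmono F (g' t).1 (g' t).2 = 0 := by
    rw [hT', Finset.sum_insert hnone, Finset.sum_map]
    simp only [hf', hg', Function.Embedding.some_apply, Option.elim]
    rw [Wmono_zero_zero, h]
    module
  have hc := sum_mono_coeff F T' f' g' h0 ij
  rw [hT', Finset.sum_insert hnone, Finset.sum_map] at hc
  simp only [hf', hg', Function.Embedding.some_apply, Option.elim] at hc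
  by_cases hij : ij = ((0,0) : ℕ × ℕ)
  · rw [if_pos hij]
    rw [if_pos hij.symm] at hc
    linear_combination hc
  · rw [if_neg hij]
    rw [if_neg (fun hh => hij hh.symm)] at hc
    linear_combination hc

theorem weyl_comm_coeff (α β : (ℕ × ℕ) →₀ F)
    (hxy : (α.sum fun ij c => c • Wmono F ij.1 ij.2) *
        (β.sum fun ij c => c • Wmono F ij.1 ij.2) -
      (β.sum fun ij c => c • Wmono F ij.1 ij.2) *
        (α.sum fun ij c => c • Wmono F ij.1 ij.2) = 1) (K : ℕ)
    (hK : ∀ ij ∈ α.support ∪ β.support, (ij : ℕ × ℕ).1 < K) :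
    ∀ ij : ℕ × ℕ,
      (∑ ab ∈ α.support, ∑ cd ∈ β.support, ∑ k ∈ Finset.range K,
        (if ((ab.1 + cd.1 - k, ab.2 + cd.2 - k) : ℕ × ℕ) = ij then
          α ab * β cd * (Ecoef F ab.2 k cd.1 - Ecoef F cd.2 k ab.1) else 0))
      = if ij = ((0,0) : ℕ × ℕ) then 1 else 0 := by
  classical
  set T : Finset (((ℕ × ℕ) × (ℕ × ℕ)) × ℕ) := (α.support ×ˢ β.support) ×ˢ Finset.range K
    with hT
  set f : ((ℕ × ℕ) × (ℕ × ℕ)) × ℕ → F := fun t =>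
    α t.1.1 * β t.1.2 * (Ecoef F t.1.1.2 t.2 t.1.2.1 - Ecoef F t.1.2.2 t.2 t.1.1.1) with hf
  set g : ((ℕ × ℕ) × (ℕ × ℕ)) × ℕ → ℕ × ℕ := fun t =>
    (t.1.1.1 + t.1.2.1 - t.2, t.1.1.2 + t.1.2.2 - t.2) with hg
  have hsum : ∑ t ∈ T, f t • Wmono F (g t).1 (g t).2 = 1 := by
    rw [hT, Finset.sum_product, Finset.sum_product, ← hxy]
    have hxyexp : (α.sum fun ij c => c • Wmono F ij.1 ij.2) *
        (β.sum fun ij c => c • Wmono F ij.1 ij.2) =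
        ∑ ab ∈ α.support, ∑ cd ∈ β.support, ∑ k ∈ Finset.range K,
          (α ab * β cd * Ecoef F ab.2 k cd.1) •
            Wmono F (ab.1 + cd.1 - k) (ab.2 + cd.2 - k) := by
      rw [Finsupp.sum, Finsupp.sum, Finset.sum_mul]
      refine Finset.sum_congr rfl fun ab hab => ?_
      rw [Finset.mul_sum]
      refine Finset.sum_congr rfl fun cd hcd => ?_
      rw [smul_mul_assoc, mul_smul_comm, smul_smul,
        Wmono_mul F ab.1 ab.2 cd.1 cd.2 K (hK cd (Finset.mem_union_right _ hcd)),
        Finset.smul_sum]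
      refine Finset.sum_congr rfl fun k hk => ?_
      rw [smul_smul, mul_assoc]
    have hyxexp : (β.sum fun ij c => c • Wmono F ij.1 ij.2) *
        (α.sum fun ij c => c • Wmono F ij.1 ij.2) =
        ∑ ab ∈ α.support, ∑ cd ∈ β.support, ∑ k ∈ Finset.range K,
          (α ab * β cd * Ecoef F cd.2 k ab.1) •
            Wmono F (ab.1 + cd.1 - k) (ab.2 + cd.2 - k) := by
      rw [Finsupp.sum, Finsupp.sum, Finset.sum_mul]
      rw [Finset.sum_congr rfl fun cd (_ : cd ∈ β.support) => Finset.mul_sum α.support _ _]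
      rw [Finset.sum_comm]
      refine Finset.sum_congr rfl fun ab hab => ?_
      refine Finset.sum_congr rfl fun cd hcd => ?_
      rw [smul_mul_assoc, mul_smul_comm, smul_smul,
        Wmono_mul F cd.1 cd.2 ab.1 ab.2 K (hK ab (Finset.mem_union_left _ hab)),
        Finset.smul_sum]
      refine Finset.sum_congr rfl fun k hk => ?_
      rw [smul_smul]
      rw [show cd.1 + ab.1 = ab.1 + cd.1 from by omega,
        show cd.2 + ab.2 = ab.2 + cd.2 from by omega]
      congr 1
      ring
    rw [hxyexp, hyxexp, ← Finset.sum_sub_distrib]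
    refine Finset.sum_congr rfl fun ab _ => ?_
    rw [← Finset.sum_sub_distrib]
    refine Finset.sum_congr rfl fun cd _ => ?_
    rw [← Finset.sum_sub_distrib]
    refine Finset.sum_congr rfl fun k _ => ?_
    simp only [hf, hg]
    rw [mul_sub]
    exact sub_smul (α ab * β cd * Ecoef F ab.2 k cd.1) (α ab * β cd * Ecoef F cd.2 k ab.1)
      (Wmono F (ab.1 + cd.1 - k) (ab.2 + cd.2 - k))
  have := sum_mono_coeff_one F T f g hsum
  intro ij
  have h2 := this ij
  rw [hT, Finset.sum_product, Finset.sum_product] at h2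
  exact h2

-- Section 4 : Poisson vanishing

theorem mem_Eset {α : (ℕ × ℕ) →₀ F} {ρ σ : ℕ} {ab : ℕ × ℕ} :
    ab ∈ Eset F α ρ σ ↔ ab ∈ α.support ∧ ab.1 * ρ + ab.2 * σ = vdeg F α ρ σ :=
  Finset.mem_filter

theorem poisson_rel (α β : (ℕ × ℕ) →₀ F)
    (hxy : (α.sum fun ij c => c • Wmono F ij.1 ij.2) *
        (β.sum fun ij c => c • Wmono F ij.1 ij.2) -
      (β.sum fun ij c => c • Wmono F ij.1 ij.2) *
        (α.sum fun ij c => c • Wmono F ij.1 ij.2) = 1)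
    (ρ σ : ℕ) (hρ : 0 < ρ) (hσ : 0 < σ)
    (hv : ρ + σ ≤ vdeg F α ρ σ) (hw : 1 ≤ vdeg F β ρ σ) :
    ∀ i j : ℕ, i * ρ + j * σ = vdeg F α ρ σ + vdeg F β ρ σ - (ρ + σ) →
      ∑ ab ∈ Eset F α ρ σ, ∑ cd ∈ Eset F β ρ σ,
        (if ab.1 + cd.1 = i + 1 ∧ ab.2 + cd.2 = j + 1 then
          α ab * β cd * (((ab.1 * cd.2 : ℕ) : F) - ((ab.2 * cd.1 : ℕ) : F)) else 0) = 0 := by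
  classical
  intro i j hij
  set K : ℕ := (α.support.sup fun ij => ij.1) + (β.support.sup fun ij => ij.1) + 2 with hKdef
  have hK : ∀ ij ∈ α.support ∪ β.support, (ij : ℕ × ℕ).1 < K := by
    intro ij hijm
    rcases Finset.mem_union.1 hijm with hm | hm
    · have h' : ij.1 ≤ (α.support.sup fun ij => ij.1) :=
        Finset.le_sup (f := fun ij : ℕ × ℕ => ij.1) hm
      omega
    · have h' : ij.1 ≤ (β.support.sup fun ij => ij.1) :=
        Finset.le_sup (f := fun ij : ℕ × ℕ => ij.1) hm
      omega
  have hK2 : 2 ≤ K := by omega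
  have hij0 : ¬(i = 0 ∧ j = 0) := by
    rintro ⟨rfl, rfl⟩
    simp only [zero_mul, add_zero] at hij
    omega
  have hcc := weyl_comm_coeff F α β hxy K hK (i, j)
  rw [if_neg (by simp only [Prod.mk.injEq]; tauto)] at hcc
  have main : ∀ ab ∈ α.support, ∀ cd ∈ β.support,
      (∑ k ∈ Finset.range K,
        (if ((ab.1 + cd.1 - k, ab.2 + cd.2 - k) : ℕ × ℕ) = (i, j) then
          α ab * β cd * (Ecoef F ab.2 k cd.1 - Ecoef F cd.2 k ab.1) else 0)) =
      (if ab.1 * ρ + ab.2 * σ = vdeg F α ρ σ ∧ cd.1 * ρ + cd.2 * σ = vdeg F β ρ σ ∧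
          ab.1 + cd.1 = i + 1 ∧ ab.2 + cd.2 = j + 1 then
        α ab * β cd * (((ab.1 * cd.2 : ℕ) : F) - ((ab.2 * cd.1 : ℕ) : F)) else 0) := by
    intro ab hab cd hcd
    have hwt1 : ab.1 * ρ + ab.2 * σ ≤ vdeg F α ρ σ :=
      Finset.le_sup (f := fun ij : ℕ × ℕ => ij.1 * ρ + ij.2 * σ) hab
    have hwt2 : cd.1 * ρ + cd.2 * σ ≤ vdeg F β ρ σ :=
      Finset.le_sup (f := fun ij : ℕ × ℕ => ij.1 * ρ + ij.2 * σ) hcd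
    by_cases hcond : ab.1 * ρ + ab.2 * σ = vdeg F α ρ σ ∧
        cd.1 * ρ + cd.2 * σ = vdeg F β ρ σ ∧
        ab.1 + cd.1 = i + 1 ∧ ab.2 + cd.2 = j + 1
    · rw [if_pos hcond]
      obtain ⟨hc1, hc2, hc3, hc4⟩ := hcond
      rw [Finset.sum_eq_single_of_mem 1 (Finset.mem_range.2 (by omega))]
      · rw [if_pos (by rw [Prod.mk.injEq]; omega)]
        rw [Ecoef_one, Ecoef_one]
        congr 1
        push_cast
        ring
      · intro k hk hk1
        rw [if_neg]
        rw [Prod.mk.injEq]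
        omega
    · rw [if_neg hcond]
      refine Finset.sum_eq_zero fun k hk => ?_
      by_cases hg : ((ab.1 + cd.1 - k, ab.2 + cd.2 - k) : ℕ × ℕ) = (i, j)
      · rw [if_pos hg]
        rw [Prod.mk.injEq] at hg
        rcases Nat.eq_zero_or_pos k with hk0 | hk0
        · subst hk0
          rw [Ecoef_zero, Ecoef_zero, sub_self, mul_zero]
        by_cases hE : Ecoef F ab.2 k cd.1 = 0 ∧ Ecoef F cd.2 k ab.1 = 0
        · rw [hE.1, hE.2, sub_self, mul_zero]
        · exfalso
          have hkb : k ≤ ab.2 + cd.2 ∧ k ≤ ab.1 + cd.1 := by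
            rcases not_and_or.1 hE with hE1 | hE1
            · have : ¬ (min ab.2 cd.1 < k) := fun hlt => hE1 (Ecoef_eq_zero F hlt)
              omega
            · have : ¬ (min cd.2 ab.1 < k) := fun hlt => hE1 (Ecoef_eq_zero F hlt)
              omega
          have he1 : ab.1 + cd.1 = i + k := by omega
          have he2 : ab.2 + cd.2 = j + k := by omega
          have hX : (ab.1 * ρ + ab.2 * σ) + (cd.1 * ρ + cd.2 * σ) =
              (i * ρ + j * σ) + k * (ρ + σ) := by
            rw [show (ab.1 * ρ + ab.2 * σ) + (cd.1 * ρ + cd.2 * σ) =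
              (ab.1 + cd.1) * ρ + (ab.2 + cd.2) * σ from by ring, he1, he2]
            ring
          have hPS : (i * ρ + j * σ) + (ρ + σ) = vdeg F α ρ σ + vdeg F β ρ σ := by omega
          have hSle : ρ + σ ≤ k * (ρ + σ) := Nat.le_mul_of_pos_left _ (by omega)
          have hk1 : k * (ρ + σ) = ρ + σ := by omega
          have hkeq : k = 1 := by
            have h11 : k * (ρ + σ) = 1 * (ρ + σ) := by rw [hk1, one_mul]
            exact Nat.eq_of_mul_eq_mul_right (by omega) h11
          subst hkeq
          exact hcond ⟨by omega, by omega, by omega, by omega⟩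
      · rw [if_neg hg]
  have hS4 : (∑ ab ∈ α.support, ∑ cd ∈ β.support,
      (if ab.1 * ρ + ab.2 * σ = vdeg F α ρ σ ∧ cd.1 * ρ + cd.2 * σ = vdeg F β ρ σ ∧
          ab.1 + cd.1 = i + 1 ∧ ab.2 + cd.2 = j + 1 then
        α ab * β cd * (((ab.1 * cd.2 : ℕ) : F) - ((ab.2 * cd.1 : ℕ) : F)) else 0)) = 0 := by
    rw [← Finset.sum_congr rfl fun ab hab =>
      Finset.sum_congr rfl fun cd hcd => main ab hab cd hcd]
    exact hcc
  refine Eq.trans ?_ hS4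
  rw [Eset, Eset, Finset.sum_filter]
  refine Finset.sum_congr rfl fun ab hab => ?_
  by_cases h1 : ab.1 * ρ + ab.2 * σ = vdeg F α ρ σ
  · rw [if_pos h1, Finset.sum_filter]
    refine Finset.sum_congr rfl fun cd hcd => ?_
    by_cases h2 : cd.1 * ρ + cd.2 * σ = vdeg F β ρ σ
    · by_cases h3 : ab.1 + cd.1 = i + 1 ∧ ab.2 + cd.2 = j + 1
      · rw [if_pos h2, if_pos h3, if_pos ⟨h1, h2, h3.1, h3.2⟩]
      · rw [if_pos h2, if_neg h3, if_neg (fun hc => h3 ⟨hc.2.2.1, hc.2.2.2⟩)]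
    · rw [if_neg h2, if_neg (fun hc => h2 hc.2.1)]
  · rw [if_neg h1, eq_comm]
    refine Finset.sum_eq_zero fun cd hcd => ?_
    rw [if_neg (fun hc => h1 hc.1)]

-- Section 5 : singleton lemma

theorem Wone_ne_zero : (1 : WeylAlgebra F) ≠ 0 := by
  intro h
  have h1 := congrArg (fun z => (Wrep F z) (1 : Polynomial F)) h
  simp only [map_one, map_zero, Module.End.one_apply, LinearMap.zero_apply] at h1
  exact one_ne_zero h1

theorem Eset_nonempty {α : (ℕ × ℕ) →₀ F} (hα : α.support.Nonempty) (ρ σ : ℕ) :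
    (Eset F α ρ σ).Nonempty := by
  obtain ⟨ab, hab, hab2⟩ := Finset.exists_mem_eq_sup α.support hα
    (fun ij : ℕ × ℕ => ij.1 * ρ + ij.2 * σ)
  exact ⟨ab, mem_Eset F |>.2 ⟨hab, hab2.symm⟩⟩

theorem support_nontriv (β : (ℕ × ℕ) →₀ F) (x : WeylAlgebra F)
    (hxy : x * (β.sum fun ij c => c • Wmono F ij.1 ij.2) -
      (β.sum fun ij c => c • Wmono F ij.1 ij.2) * x = 1) :
    ∃ ij ∈ β.support, ij ≠ ((0, 0) : ℕ × ℕ) := by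
  classical
  by_contra hcon
  push_neg at hcon
  have hy : (β.sum fun ij c => c • Wmono F ij.1 ij.2) = β (0,0) • 1 := by
    rw [Finsupp.sum]
    by_cases h0 : (0,0) ∈ β.support
    · have hsub : β.support = {((0,0) : ℕ × ℕ)} := by
        apply Finset.eq_singleton_iff_unique_mem.2
        exact ⟨h0, fun ij hij => hcon ij hij⟩
      rw [hsub, Finset.sum_singleton, Wmono_zero_zero]
    · have hsub : β.support = ∅ := by
        refine Finset.eq_empty_of_forall_notMem fun ij hij => ?_
        have := hcon ij hij
        exact h0 (this ▸ hij)
      rw [hsub, Finset.sum_empty]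
      rw [Finsupp.notMem_support_iff.1 h0, zero_smul]
  rw [hy] at hxy
  rw [mul_smul_comm, smul_mul_assoc, mul_one, one_mul, sub_self] at hxy
  exact Wone_ne_zero F hxy.symm

theorem vdeg_pos {β : (ℕ × ℕ) →₀ F} {ρ σ : ℕ} (hρ : 0 < ρ) (hσ : 0 < σ)
    (h : ∃ ij ∈ β.support, ij ≠ ((0,0) : ℕ × ℕ)) : 1 ≤ vdeg F β ρ σ := by
  obtain ⟨ij, hmem, hne⟩ := h
  have hle : ij.1 * ρ + ij.2 * σ ≤ vdeg F β ρ σ :=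
    Finset.le_sup (f := fun ij : ℕ × ℕ => ij.1 * ρ + ij.2 * σ) hmem
  have : ij.1 ≠ 0 ∨ ij.2 ≠ 0 := by
    by_contra hc
    push_neg at hc
    exact hne (Prod.ext hc.1 hc.2)
  rcases this with h1 | h1
  · exact le_trans (Nat.succ_le_of_lt (Nat.mul_pos (by omega) hρ))
      (le_trans (Nat.le_add_right _ _) hle)
  · exact le_trans (Nat.succ_le_of_lt (Nat.mul_pos (by omega) hσ))
      (le_trans (Nat.le_add_left _ _) hle)

theorem poisson_singleton (α β : (ℕ × ℕ) →₀ F) (ρ σ : ℕ) (hρ : 0 < ρ) (hσ : 0 < σ)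
    (hv : 1 ≤ vdeg F α ρ σ) (hw : 1 ≤ vdeg F β ρ σ)
    (hrel : ∀ i j : ℕ, i * ρ + j * σ = vdeg F α ρ σ + vdeg F β ρ σ - (ρ + σ) →
      ∑ ab ∈ Eset F α ρ σ, ∑ cd ∈ Eset F β ρ σ,
        (if ab.1 + cd.1 = i + 1 ∧ ab.2 + cd.2 = j + 1 then
          α ab * β cd * (((ab.1 * cd.2 : ℕ) : F) - ((ab.2 * cd.1 : ℕ) : F)) else 0) = 0)
    (A B : ℕ) (hAB : Eset F α ρ σ = {((A, B) : ℕ × ℕ)}) :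
    ∀ cd ∈ Eset F β ρ σ, A * cd.2 = B * cd.1 := by
  classical
  have hABmem : ((A,B) : ℕ × ℕ) ∈ Eset F α ρ σ := by
    rw [hAB]; exact Finset.mem_singleton_self _
  have hABv : A * ρ + B * σ = vdeg F α ρ σ := (mem_Eset F |>.1 hABmem).2
  have hABs : ((A,B) : ℕ × ℕ) ∈ α.support := (mem_Eset F |>.1 hABmem).1
  have hABne : α (A,B) ≠ 0 := Finsupp.mem_support_iff.1 hABs
  intro cd hcd
  have hcdv : cd.1 * ρ + cd.2 * σ = vdeg F β ρ σ := (mem_Eset F |>.1 hcd).2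
  have hcds : cd ∈ β.support := (mem_Eset F |>.1 hcd).1
  have hcdne : β cd ≠ 0 := Finsupp.mem_support_iff.1 hcds
  by_cases hz1 : A + cd.1 = 0
  · have hA : A = 0 := by omega
    have hc : cd.1 = 0 := by omega
    rw [hA, hc, zero_mul, mul_zero]
  by_cases hz2 : B + cd.2 = 0
  · have hB : B = 0 := by omega
    have hd : cd.2 = 0 := by omega
    rw [hB, hd, mul_zero, zero_mul]
  set i := A + cd.1 - 1 with hidef
  set j := B + cd.2 - 1 with hjdef
  have hi1 : i + 1 = A + cd.1 := by omega
  have hj1 : j + 1 = B + cd.2 := by omega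
  have hlev : i * ρ + j * σ = vdeg F α ρ σ + vdeg F β ρ σ - (ρ + σ) := by
    have e3 : (i+1) * ρ + (j+1) * σ = (A * ρ + B * σ) + (cd.1 * ρ + cd.2 * σ) := by
      rw [hi1, hj1]; ring
    have e4 : (i+1) * ρ + (j+1) * σ = (i * ρ + j * σ) + (ρ + σ) := by ring
    rw [← hABv, ← hcdv, ← e3, e4, Nat.add_sub_cancel]
  have hS := hrel i j hlev
  rw [hAB, Finset.sum_singleton] at hS
  rw [Finset.sum_eq_single_of_mem cd hcd] at hS
  · rw [if_pos ⟨hi1.symm ▸ rfl, hj1.symm ▸ rfl⟩] at hS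
    have hsub : ((A * cd.2 : ℕ) : F) - ((B * cd.1 : ℕ) : F) = 0 := by
      rcases mul_eq_zero.1 hS with h | h
      · rcases mul_eq_zero.1 h with h' | h'
        · exact absurd h' hABne
        · exact absurd h' hcdne
      · exact h
    have := sub_eq_zero.1 hsub
    exact_mod_cast this
  · intro cd' hcd' hne
    rw [if_neg]
    rintro ⟨hc1, hc2⟩
    apply hne
    ext
    · omega
    · omega

theorem poisson_card_le_one (α β : (ℕ × ℕ) →₀ F) (ρ σ : ℕ) (hρ : 0 < ρ) (hσ : 0 < σ)
    (hv : 1 ≤ vdeg F α ρ σ) (hw : 1 ≤ vdeg F β ρ σ)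
    (hrel : ∀ i j : ℕ, i * ρ + j * σ = vdeg F α ρ σ + vdeg F β ρ σ - (ρ + σ) →
      ∑ ab ∈ Eset F α ρ σ, ∑ cd ∈ Eset F β ρ σ,
        (if ab.1 + cd.1 = i + 1 ∧ ab.2 + cd.2 = j + 1 then
          α ab * β cd * (((ab.1 * cd.2 : ℕ) : F) - ((ab.2 * cd.1 : ℕ) : F)) else 0) = 0)
    (A B : ℕ) (hAB : Eset F α ρ σ = {((A, B) : ℕ × ℕ)}) :
    (Eset F β ρ σ).card ≤ 1 := by
  have key := poisson_singleton F α β ρ σ hρ hσ hv hw hrel A B hAB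
  have hABmem : ((A,B) : ℕ × ℕ) ∈ Eset F α ρ σ := by
    rw [hAB]; exact Finset.mem_singleton_self _
  have hABv : A * ρ + B * σ = vdeg F α ρ σ := (mem_Eset F |>.1 hABmem).2
  have hv0 : 0 < A * ρ + B * σ := by omega
  refine Finset.card_le_one.2 fun cd hcd cd' hcd' => ?_
  have h1 := key cd hcd
  have h2 := key cd' hcd'
  have hw1 : cd.1 * ρ + cd.2 * σ = vdeg F β ρ σ := (mem_Eset F |>.1 hcd).2
  have hw2 : cd'.1 * ρ + cd'.2 * σ = vdeg F β ρ σ := (mem_Eset F |>.1 hcd').2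
  have hc : cd.1 * (A * ρ + B * σ) = cd'.1 * (A * ρ + B * σ) := by
    calc cd.1 * (A * ρ + B * σ) = A * (cd.1 * ρ) + (B * cd.1) * σ := by ring
      _ = A * (cd.1 * ρ) + (A * cd.2) * σ := by rw [h1]
      _ = A * (cd.1 * ρ + cd.2 * σ) := by ring
      _ = A * (cd'.1 * ρ + cd'.2 * σ) := by rw [hw1, hw2]
      _ = A * (cd'.1 * ρ) + (A * cd'.2) * σ := by ring
      _ = A * (cd'.1 * ρ) + (B * cd'.1) * σ := by rw [h2]
      _ = cd'.1 * (A * ρ + B * σ) := by ring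
  have hceq : cd.1 = cd'.1 := Nat.eq_of_mul_eq_mul_right hv0 hc
  have hdeq : cd.2 = cd'.2 := by
    have h3 : cd.2 * σ = cd'.2 * σ := by
      have := hw1.trans hw2.symm
      rw [hceq] at this
      exact Nat.add_left_cancel this
    exact Nat.eq_of_mul_eq_mul_right hσ h3
  exact Prod.ext hceq hdeq

theorem poisson_rel_swap (α β : (ℕ × ℕ) →₀ F) (ρ σ : ℕ)
    (hrel : ∀ i j : ℕ, i * ρ + j * σ = vdeg F α ρ σ + vdeg F β ρ σ - (ρ + σ) →
      ∑ ab ∈ Eset F α ρ σ, ∑ cd ∈ Eset F β ρ σ,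
        (if ab.1 + cd.1 = i + 1 ∧ ab.2 + cd.2 = j + 1 then
          α ab * β cd * (((ab.1 * cd.2 : ℕ) : F) - ((ab.2 * cd.1 : ℕ) : F)) else 0) = 0) :
    ∀ i j : ℕ, i * ρ + j * σ = vdeg F β ρ σ + vdeg F α ρ σ - (ρ + σ) →
      ∑ cd ∈ Eset F β ρ σ, ∑ ab ∈ Eset F α ρ σ,
        (if cd.1 + ab.1 = i + 1 ∧ cd.2 + ab.2 = j + 1 then
          β cd * α ab * (((cd.1 * ab.2 : ℕ) : F) - ((cd.2 * ab.1 : ℕ) : F)) else 0) = 0 := by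
  classical
  intro i j hlev
  have hlev' : i * ρ + j * σ = vdeg F α ρ σ + vdeg F β ρ σ - (ρ + σ) := by omega
  have h := hrel i j hlev'
  rw [Finset.sum_comm]
  have : ∀ ab ∈ Eset F α ρ σ, ∀ cd ∈ Eset F β ρ σ,
      (if cd.1 + ab.1 = i + 1 ∧ cd.2 + ab.2 = j + 1 then
        β cd * α ab * (((cd.1 * ab.2 : ℕ) : F) - ((cd.2 * ab.1 : ℕ) : F)) else 0) =
      - (if ab.1 + cd.1 = i + 1 ∧ ab.2 + cd.2 = j + 1 then
        α ab * β cd * (((ab.1 * cd.2 : ℕ) : F) - ((ab.2 * cd.1 : ℕ) : F)) else 0) := by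
    intro ab _ cd _
    by_cases hc : ab.1 + cd.1 = i + 1 ∧ ab.2 + cd.2 = j + 1
    · rw [if_pos hc, if_pos ⟨by omega, by omega⟩]
      push_cast
      ring
    · rw [if_neg hc, if_neg (by omega), neg_zero]
  rw [Finset.sum_congr rfl fun ab hab => Finset.sum_congr rfl fun cd hcd => this ab hab cd hcd]
  rw [Finset.sum_congr rfl fun ab (_ : ab ∈ Eset F α ρ σ) => Finset.sum_neg_distrib _,
    Finset.sum_neg_distrib, h, neg_zero]

-- Section 6 : Newton polygon combinatorics

theorem vdeg_smul (α : (ℕ × ℕ) →₀ F) (k ρ σ : ℕ) :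
    vdeg F α (k * ρ) (k * σ) = k * vdeg F α ρ σ := by
  have gsup : ∀ x y : ℕ, k * max x y = max (k * x) (k * y) := fun x y => by
    rcases le_total x y with h | h
    · rw [max_eq_right h, max_eq_right (Nat.mul_le_mul_left k h)]
    · rw [max_eq_left h, max_eq_left (Nat.mul_le_mul_left k h)]
  rw [vdeg, vdeg,
    show (fun ij : ℕ × ℕ => ij.1 * (k * ρ) + ij.2 * (k * σ)) =
      (fun n => k * n) ∘ (fun ij : ℕ × ℕ => ij.1 * ρ + ij.2 * σ) from
        funext fun ij => by simp only [Function.comp_apply]; ring]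
  exact (Finset.comp_sup_eq_sup_comp _ (fun x y => gsup x y) (by simp)).symm

theorem Eset_smul (α : (ℕ × ℕ) →₀ F) {k : ℕ} (hk : 0 < k) (ρ σ : ℕ) :
    Eset F α (k * ρ) (k * σ) = Eset F α ρ σ := by
  ext ij
  rw [mem_Eset, mem_Eset, vdeg_smul]
  constructor
  · rintro ⟨h1, h2⟩
    refine ⟨h1, ?_⟩
    have h3 : ij.1 * (k * ρ) + ij.2 * (k * σ) = k * (ij.1 * ρ + ij.2 * σ) := by ring
    rw [h3] at h2
    exact Nat.eq_of_mul_eq_mul_left hk h2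
  · rintro ⟨h1, h2⟩
    refine ⟨h1, ?_⟩
    rw [show ij.1 * (k * ρ) + ij.2 * (k * σ) = k * (ij.1 * ρ + ij.2 * σ) from by ring, h2]

theorem face_combined (α : (ℕ × ℕ) →₀ F) (ρ₁ σ₁ ρ₂ σ₂ : ℕ) (P : ℕ × ℕ)
    (hP1 : P ∈ Eset F α ρ₁ σ₁) (hP2 : P ∈ Eset F α ρ₂ σ₂)
    (hcard : (Eset F α ρ₁ σ₁ ∩ Eset F α ρ₂ σ₂).card ≤ 1)
    (s t : ℕ) (hs : 0 < s) (ht : 0 < t) :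
    Eset F α (s * ρ₁ + t * ρ₂) (s * σ₁ + t * σ₂) = {P} := by
  obtain ⟨hPs, hPv1⟩ := mem_Eset F |>.1 hP1
  obtain ⟨-, hPv2⟩ := mem_Eset F |>.1 hP2
  have expand : ∀ R : ℕ × ℕ, R.1 * (s * ρ₁ + t * ρ₂) + R.2 * (s * σ₁ + t * σ₂) =
      s * (R.1 * ρ₁ + R.2 * σ₁) + t * (R.1 * ρ₂ + R.2 * σ₂) := fun R => by ring
  have hvd : vdeg F α (s * ρ₁ + t * ρ₂) (s * σ₁ + t * σ₂) =
      s * vdeg F α ρ₁ σ₁ + t * vdeg F α ρ₂ σ₂ := by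
    apply le_antisymm
    · apply Finset.sup_le
      intro R hR
      rw [expand R]
      exact Nat.add_le_add
        (Nat.mul_le_mul_left s
          (Finset.le_sup (f := fun ij : ℕ × ℕ => ij.1 * ρ₁ + ij.2 * σ₁) hR))
        (Nat.mul_le_mul_left t
          (Finset.le_sup (f := fun ij : ℕ × ℕ => ij.1 * ρ₂ + ij.2 * σ₂) hR))
    · have h : P.1 * (s * ρ₁ + t * ρ₂) + P.2 * (s * σ₁ + t * σ₂) ≤
          vdeg F α (s * ρ₁ + t * ρ₂) (s * σ₁ + t * σ₂) := Finset.le_sup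
        (f := fun ij : ℕ × ℕ => ij.1 * (s * ρ₁ + t * ρ₂) + ij.2 * (s * σ₁ + t * σ₂)) hPs
      rw [expand P, hPv1, hPv2] at h
      exact h
  ext R
  rw [mem_Eset, hvd]
  constructor
  · rintro ⟨hRs, hRv⟩
    rw [expand R] at hRv
    have hle1 : R.1 * ρ₁ + R.2 * σ₁ ≤ vdeg F α ρ₁ σ₁ :=
      Finset.le_sup (f := fun ij : ℕ × ℕ => ij.1 * ρ₁ + ij.2 * σ₁) hRs
    have hle2 : R.1 * ρ₂ + R.2 * σ₂ ≤ vdeg F α ρ₂ σ₂ :=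
      Finset.le_sup (f := fun ij : ℕ × ℕ => ij.1 * ρ₂ + ij.2 * σ₂) hRs
    have hm1 : s * (R.1 * ρ₁ + R.2 * σ₁) ≤ s * vdeg F α ρ₁ σ₁ := Nat.mul_le_mul_left s hle1
    have hm2 : t * (R.1 * ρ₂ + R.2 * σ₂) ≤ t * vdeg F α ρ₂ σ₂ := Nat.mul_le_mul_left t hle2
    have he1 : s * (R.1 * ρ₁ + R.2 * σ₁) = s * vdeg F α ρ₁ σ₁ := by omega
    have he2 : t * (R.1 * ρ₂ + R.2 * σ₂) = t * vdeg F α ρ₂ σ₂ := by omega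
    have hv1 : R.1 * ρ₁ + R.2 * σ₁ = vdeg F α ρ₁ σ₁ := Nat.eq_of_mul_eq_mul_left hs he1
    have hv2 : R.1 * ρ₂ + R.2 * σ₂ = vdeg F α ρ₂ σ₂ := Nat.eq_of_mul_eq_mul_left ht he2
    have hRmem : R ∈ Eset F α ρ₁ σ₁ ∩ Eset F α ρ₂ σ₂ :=
      Finset.mem_inter.2 ⟨mem_Eset F |>.2 ⟨hRs, hv1⟩, mem_Eset F |>.2 ⟨hRs, hv2⟩⟩
    have hPmem : P ∈ Eset F α ρ₁ σ₁ ∩ Eset F α ρ₂ σ₂ := Finset.mem_inter.2 ⟨hP1, hP2⟩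
    rw [Finset.mem_singleton]
    exact Finset.card_le_one.1 hcard _ hRmem _ hPmem
  · intro hmem
    rw [Finset.mem_singleton] at hmem
    subst hmem
    exact ⟨hPs, by rw [expand _, hPv1, hPv2]⟩

theorem singleton_strict {β : (ℕ × ℕ) →₀ F} {ρ σ : ℕ} {Q : ℕ × ℕ}
    (hQ : Eset F β ρ σ = {Q}) {R : ℕ × ℕ} (hR : R ∈ β.support) (hne : R ≠ Q) :
    R.1 * ρ + R.2 * σ < Q.1 * ρ + Q.2 * σ := by
  have hQm : Q ∈ Eset F β ρ σ := by rw [hQ]; exact Finset.mem_singleton_self _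
  have hQv : Q.1 * ρ + Q.2 * σ = vdeg F β ρ σ := (mem_Eset F |>.1 hQm).2
  have hle : R.1 * ρ + R.2 * σ ≤ vdeg F β ρ σ :=
    Finset.le_sup (f := fun ij : ℕ × ℕ => ij.1 * ρ + ij.2 * σ) hR
  rw [hQv]
  rcases lt_or_eq_of_le hle with h | h
  · exact h
  · exact absurd (Finset.mem_singleton.1 (hQ ▸ (mem_Eset F |>.2 ⟨hR, h⟩))) hne

theorem face_endpoint (β : (ℕ × ℕ) →₀ F) (ρ₁ σ₁ ρ₂ σ₂ s t : ℕ)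
    (hβ : β.support.Nonempty) (Q : ℕ × ℕ)
    (hQ : Eset F β (s * ρ₁ + t * ρ₂) (s * σ₁ + t * σ₂) = {Q})
    (hbig : t * vdeg F β ρ₂ σ₂ < s) :
    Q ∈ Eset F β ρ₁ σ₁ := by
  have hQm : Q ∈ Eset F β (s * ρ₁ + t * ρ₂) (s * σ₁ + t * σ₂) := by
    rw [hQ]; exact Finset.mem_singleton_self _
  obtain ⟨hQs, hQv⟩ := mem_Eset F |>.1 hQm
  by_contra hcon
  have hQne : Q.1 * ρ₁ + Q.2 * σ₁ ≠ vdeg F β ρ₁ σ₁ :=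
    fun h => hcon (mem_Eset F |>.2 ⟨hQs, h⟩)
  have hQle : Q.1 * ρ₁ + Q.2 * σ₁ ≤ vdeg F β ρ₁ σ₁ :=
    Finset.le_sup (f := fun ij : ℕ × ℕ => ij.1 * ρ₁ + ij.2 * σ₁) hQs
  obtain ⟨R, hR⟩ := Eset_nonempty F hβ ρ₁ σ₁
  obtain ⟨hRs, hRv⟩ := mem_Eset F |>.1 hR
  have hmax : R.1 * (s * ρ₁ + t * ρ₂) + R.2 * (s * σ₁ + t * σ₂) ≤
      Q.1 * (s * ρ₁ + t * ρ₂) + Q.2 * (s * σ₁ + t * σ₂) := by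
    rw [hQv]
    exact Finset.le_sup
      (f := fun ij : ℕ × ℕ => ij.1 * (s * ρ₁ + t * ρ₂) + ij.2 * (s * σ₁ + t * σ₂)) hRs
  have expand : ∀ X : ℕ × ℕ, X.1 * (s * ρ₁ + t * ρ₂) + X.2 * (s * σ₁ + t * σ₂) =
      s * (X.1 * ρ₁ + X.2 * σ₁) + t * (X.1 * ρ₂ + X.2 * σ₂) := fun X => by ring
  rw [expand R, expand Q, hRv] at hmax
  have hQ2le : Q.1 * ρ₂ + Q.2 * σ₂ ≤ vdeg F β ρ₂ σ₂ :=
    Finset.le_sup (f := fun ij : ℕ × ℕ => ij.1 * ρ₂ + ij.2 * σ₂) hQs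
  have hv1pos : 1 ≤ vdeg F β ρ₁ σ₁ := by omega
  have hchain : s * vdeg F β ρ₁ σ₁ < s * vdeg F β ρ₁ σ₁ := by
    calc s * vdeg F β ρ₁ σ₁
        ≤ s * vdeg F β ρ₁ σ₁ + t * (R.1 * ρ₂ + R.2 * σ₂) := Nat.le_add_right _ _
      _ ≤ s * (Q.1 * ρ₁ + Q.2 * σ₁) + t * (Q.1 * ρ₂ + Q.2 * σ₂) := hmax
      _ ≤ s * (vdeg F β ρ₁ σ₁ - 1) + t * vdeg F β ρ₂ σ₂ :=
          Nat.add_le_add (Nat.mul_le_mul_left s (by omega)) (Nat.mul_le_mul_left t hQ2le)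
      _ < s * (vdeg F β ρ₁ σ₁ - 1) + s := by omega
      _ = s * vdeg F β ρ₁ σ₁ := by
          have hvv : vdeg F β ρ₁ σ₁ - 1 + 1 = vdeg F β ρ₁ σ₁ := by omega
          calc s * (vdeg F β ρ₁ σ₁ - 1) + s = s * ((vdeg F β ρ₁ σ₁ - 1) + 1) := by ring
            _ = s * vdeg F β ρ₁ σ₁ := by rw [hvv]
  exact absurd hchain (lt_irrefl _)


set_option maxHeartbeats 1000000 in
theorem chain_step (β : (ℕ × ℕ) →₀ F) (ρ₁ σ₁ ρ₂ σ₂ : ℕ) (s u K : ℕ)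
    (hs : 1 ≤ s) (hu : 2 ≤ u) (hK : s + u = K)
    (W₁ W₂ : ℕ)
    (hW₁ : ∀ R ∈ β.support, R.1 * ρ₁ + R.2 * σ₁ ≤ W₁)
    (hW₂ : ∀ R ∈ β.support, R.1 * ρ₂ + R.2 * σ₂ ≤ W₂)
    (hfact : ∀ D : ℕ, 0 < D → D ≤ W₁ + W₂ → D ∣ K)
    (Q Q' : ℕ × ℕ)
    (hQ : Eset F β (s * ρ₁ + u * ρ₂) (s * σ₁ + u * σ₂) = {Q})
    (hQ' : Eset F β ((s+1) * ρ₁ + (u-1) * ρ₂) ((s+1) * σ₁ + (u-1) * σ₂) = {Q'}) :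
    Q = Q' := by
  by_contra hne
  have hQs : Q ∈ β.support := by
    have h : Q ∈ Eset F β (s * ρ₁ + u * ρ₂) (s * σ₁ + u * σ₂) := by
      rw [hQ]; exact Finset.mem_singleton_self _
    exact (mem_Eset F |>.1 h).1
  have hQ's : Q' ∈ β.support := by
    have h : Q' ∈ Eset F β ((s+1) * ρ₁ + (u-1) * ρ₂) ((s+1) * σ₁ + (u-1) * σ₂) := by
      rw [hQ']; exact Finset.mem_singleton_self _
    exact (mem_Eset F |>.1 h).1
  have h1 := singleton_strict F hQ hQ's (fun h => hne h.symm)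
  have h2 := singleton_strict F hQ' hQs hne
  have expand : ∀ (X : ℕ × ℕ) (e f : ℕ),
      X.1 * (e * ρ₁ + f * ρ₂) + X.2 * (e * σ₁ + f * σ₂) =
      e * (X.1 * ρ₁ + X.2 * σ₁) + f * (X.1 * ρ₂ + X.2 * σ₂) := fun X e f => by ring
  rw [expand Q' s u, expand Q s u] at h1
  rw [expand Q (s+1) (u-1), expand Q' (s+1) (u-1)] at h2
  have hb1 := hW₁ Q hQs
  have hb2 := hW₂ Q hQs
  have hb3 := hW₁ Q' hQ's
  have hb4 := hW₂ Q' hQ's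
  obtain ⟨x1, hx1⟩ : ∃ n, Q.1 * ρ₁ + Q.2 * σ₁ = n := ⟨_, rfl⟩
  obtain ⟨x2, hx2⟩ : ∃ n, Q.1 * ρ₂ + Q.2 * σ₂ = n := ⟨_, rfl⟩
  obtain ⟨y1, hy1⟩ : ∃ n, Q'.1 * ρ₁ + Q'.2 * σ₁ = n := ⟨_, rfl⟩
  obtain ⟨y2, hy2⟩ : ∃ n, Q'.1 * ρ₂ + Q'.2 * σ₂ = n := ⟨_, rfl⟩
  rw [hx1, hx2, hy1, hy2] at h1 h2
  rw [hx1] at hb1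
  rw [hx2] at hb2
  rw [hy1] at hb3
  rw [hy2] at hb4
  -- pass to ℤ
  have hu' : 1 ≤ u := by omega
  zify at h1
  zify [hu'] at h2
  have h1z : 0 < (s:ℤ) * ((x1:ℤ) - y1) + (u:ℤ) * ((x2:ℤ) - y2) := by linarith
  have h2z : ((s:ℤ)+1) * ((x1:ℤ) - y1) + ((u:ℤ)-1) * ((x2:ℤ) - y2) < 0 := by linarith
  set a : ℤ := (x1:ℤ) - y1 with hadef
  set c : ℤ := (x2:ℤ) - y2 with hcdef
  have hD : 0 < c - a := by linarith
  have hDW : c - a ≤ ((W₁ : ℤ) + W₂) := by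
    have : (y1:ℤ) ≤ W₁ := by exact_mod_cast hb3
    have : (x2:ℤ) ≤ W₂ := by exact_mod_cast hb2
    have : (0:ℤ) ≤ x1 := by positivity
    have : (0:ℤ) ≤ y2 := by positivity
    rw [hadef, hcdef]
    have hy1' : (y1:ℤ) ≤ W₁ := by exact_mod_cast hb3
    have hx2' : (x2:ℤ) ≤ W₂ := by exact_mod_cast hb2
    have hx1' : (0:ℤ) ≤ (x1:ℤ) := Int.natCast_nonneg x1
    have hy2' : (0:ℤ) ≤ (y2:ℤ) := Int.natCast_nonneg y2
    linarith
  have hDnat : ∃ Dn : ℕ, (Dn : ℤ) = c - a ∧ 0 < Dn ∧ Dn ≤ W₁ + W₂ := by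
    refine ⟨(c - a).toNat, ?_, ?_, ?_⟩
    · exact Int.toNat_of_nonneg (le_of_lt hD)
    · omega
    · omega
  obtain ⟨Dn, hDn, hDnpos, hDnle⟩ := hDnat
  obtain ⟨m, hm⟩ := hfact Dn hDnpos hDnle
  have hmz : (K : ℤ) = (c - a) * m := by
    rw [← hDn]
    exact_mod_cast congrArg (Nat.cast : ℕ → ℤ) hm
  have hKz : (K : ℤ) = (s:ℤ) + u := by omega
  have key1 : (s:ℤ) * (c - a) < (K:ℤ) * c := by
    rw [hKz]; linarith [h1z]
  have key2 : (K:ℤ) * c < ((s:ℤ)+1) * (c - a) := by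
    rw [hKz]; linarith [h2z]
  have k1 : (c - a) * (s:ℤ) < (c - a) * ((m:ℤ) * c) := by
    have : (K:ℤ) * c = (c - a) * ((m:ℤ) * c) := by rw [hmz]; ring
    linarith [key1, this.symm.le]
  have k2 : (c - a) * ((m:ℤ) * c) < (c - a) * ((s:ℤ)+1) := by
    have : (K:ℤ) * c = (c - a) * ((m:ℤ) * c) := by rw [hmz]; ring
    linarith [key2]
  have k1' : (s:ℤ) < (m:ℤ) * c := lt_of_mul_lt_mul_left k1 (le_of_lt hD)
  have k2' : (m:ℤ) * c < (s:ℤ) + 1 := lt_of_mul_lt_mul_left k2 (le_of_lt hD)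
  obtain ⟨n, hn⟩ : ∃ n : ℤ, (m:ℤ) * c = n := ⟨_, rfl⟩
  rw [hn] at k1' k2'
  omega

theorem inter_card_le_one (β : (ℕ × ℕ) →₀ F) (ρ₁ σ₁ ρ₂ σ₂ : ℕ)
    (hσ₁ : 0 < σ₁) (hne : ρ₁ * σ₂ ≠ ρ₂ * σ₁) :
    (Eset F β ρ₁ σ₁ ∩ Eset F β ρ₂ σ₂).card ≤ 1 := by
  refine Finset.card_le_one.2 fun R hR R' hR' => ?_
  obtain ⟨hR1, hR2⟩ := Finset.mem_inter.1 hR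
  obtain ⟨hR1', hR2'⟩ := Finset.mem_inter.1 hR'
  have e1 : R.1 * ρ₁ + R.2 * σ₁ = R'.1 * ρ₁ + R'.2 * σ₁ :=
    ((mem_Eset F |>.1 hR1).2).trans ((mem_Eset F |>.1 hR1').2).symm
  have e2 : R.1 * ρ₂ + R.2 * σ₂ = R'.1 * ρ₂ + R'.2 * σ₂ :=
    ((mem_Eset F |>.1 hR2).2).trans ((mem_Eset F |>.1 hR2').2).symm
  have e1z : ((R.1:ℤ) - R'.1) * ρ₁ + ((R.2:ℤ) - R'.2) * σ₁ = 0 := by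
    have := congrArg (Nat.cast : ℕ → ℤ) e1
    push_cast at this
    linarith
  have e2z : ((R.1:ℤ) - R'.1) * ρ₂ + ((R.2:ℤ) - R'.2) * σ₂ = 0 := by
    have := congrArg (Nat.cast : ℕ → ℤ) e2
    push_cast at this
    linarith
  have hdet : ((ρ₁:ℤ) * σ₂ - (ρ₂:ℤ) * σ₁) ≠ 0 := by
    intro h
    apply hne
    have : ((ρ₁ * σ₂ : ℕ) : ℤ) = ((ρ₂ * σ₁ : ℕ) : ℤ) := by push_cast; linarith
    exact_mod_cast this
  have ha : ((R.1:ℤ) - R'.1) * ((ρ₁:ℤ) * σ₂ - (ρ₂:ℤ) * σ₁) = 0 := by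
    linear_combination (σ₂:ℤ) * e1z - (σ₁:ℤ) * e2z
  have ha0 : (R.1:ℤ) - R'.1 = 0 := by
    rcases mul_eq_zero.1 ha with h | h
    · exact h
    · exact absurd h hdet
  have hb0 : (R.2:ℤ) - R'.2 = 0 := by
    rw [ha0, zero_mul, zero_add] at e1z
    rcases mul_eq_zero.1 e1z with h | h
    · exact h
    · exfalso; omega
  ext
  · omega
  · omega


set_option maxHeartbeats 1000000 in
/-- Lemma 5.4. -/
theorem adjacent_edges_of_inverse (x y : WeylAlgebra F) (α β : (ℕ × ℕ) →₀ F)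
    (hrepx : Represents F α x) (hrepy : Represents F β y)
    (hxy : x * y - y * x = 1)
    (hvall : ∀ ρ σ : ℕ, 0 < ρ → 0 < σ → Nat.Coprime ρ σ → ρ + σ ≤ vdeg F α ρ σ)
    (ρ₁ σ₁ ρ₂ σ₂ : ℕ) (hρ₁ : 0 < ρ₁) (hσ₁ : 0 < σ₁) (hρ₂ : 0 < ρ₂) (hσ₂ : 0 < σ₂)
    (hco₁ : Nat.Coprime ρ₁ σ₁) (hco₂ : Nat.Coprime ρ₂ σ₂)
    (hne : ρ₁ * σ₂ ≠ ρ₂ * σ₁)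
    (he₁ : 1 < (Eset F α ρ₁ σ₁).card) (he₂ : 1 < (Eset F α ρ₂ σ₂).card)
    (hadj : (Eset F α ρ₁ σ₁ ∩ Eset F α ρ₂ σ₂).card = 1) :
    1 < (Eset F β ρ₁ σ₁).card ∧ 1 < (Eset F β ρ₂ σ₂).card ∧
      (Eset F β ρ₁ σ₁ ∩ Eset F β ρ₂ σ₂).card = 1 := by
  classical
  have hxy' : (α.sum fun ij c => c • Wmono F ij.1 ij.2) *
      (β.sum fun ij c => c • Wmono F ij.1 ij.2) -
      (β.sum fun ij c => c • Wmono F ij.1 ij.2) *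
      (α.sum fun ij c => c • Wmono F ij.1 ij.2) = 1 := by
    rw [← hrepx, ← hrepy]; exact hxy
  have hβnz : ∃ ij ∈ β.support, ij ≠ ((0,0) : ℕ × ℕ) :=
    support_nontriv F β x (by rw [← hrepy]; exact hxy)
  have hβne : β.support.Nonempty := by
    obtain ⟨ij, h, -⟩ := hβnz; exact ⟨ij, h⟩
  obtain ⟨P, hP⟩ := Finset.card_eq_one.1 hadj
  have hPmem : P ∈ Eset F α ρ₁ σ₁ ∩ Eset F α ρ₂ σ₂ := by
    rw [hP]; exact Finset.mem_singleton_self _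
  have hP1 : P ∈ Eset F α ρ₁ σ₁ := (Finset.mem_inter.1 hPmem).1
  have hP2 : P ∈ Eset F α ρ₂ σ₂ := (Finset.mem_inter.1 hPmem).2
  have hcard_le : (Eset F α ρ₁ σ₁ ∩ Eset F α ρ₂ σ₂).card ≤ 1 := le_of_eq hadj
  have hpois : ∀ ρ σ : ℕ, 0 < ρ → 0 < σ → Nat.Coprime ρ σ →
      ∀ i j : ℕ, i * ρ + j * σ = vdeg F α ρ σ + vdeg F β ρ σ - (ρ + σ) →
      ∑ ab ∈ Eset F α ρ σ, ∑ cd ∈ Eset F β ρ σ,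
        (if ab.1 + cd.1 = i + 1 ∧ ab.2 + cd.2 = j + 1 then
          α ab * β cd * (((ab.1 * cd.2 : ℕ) : F) - ((ab.2 * cd.1 : ℕ) : F)) else 0) = 0 :=
    fun ρ σ hρ hσ hco => poisson_rel F α β hxy' ρ σ hρ hσ
      (hvall ρ σ hρ hσ hco) (vdeg_pos F hρ hσ hβnz)
  have hcon1 : 1 < (Eset F β ρ₁ σ₁).card := by
    by_contra hc
    push_neg at hc
    have hpos : 0 < (Eset F β ρ₁ σ₁).card :=
      Finset.card_pos.2 (Eset_nonempty F hβne ρ₁ σ₁)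
    obtain ⟨Q0, hQ0⟩ := Finset.card_eq_one.1 (le_antisymm hc hpos)
    have hswap := poisson_rel_swap F α β ρ₁ σ₁ (hpois ρ₁ σ₁ hρ₁ hσ₁ hco₁)
    have hres := poisson_card_le_one F β α ρ₁ σ₁ hρ₁ hσ₁
      (vdeg_pos F hρ₁ hσ₁ hβnz)
      (le_trans (by omega) (hvall ρ₁ σ₁ hρ₁ hσ₁ hco₁)) hswap Q0.1 Q0.2
      (by rw [Prod.mk.eta]; exact hQ0)
    omega
  have hcon2 : 1 < (Eset F β ρ₂ σ₂).card := by
    by_contra hc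
    push_neg at hc
    have hpos : 0 < (Eset F β ρ₂ σ₂).card :=
      Finset.card_pos.2 (Eset_nonempty F hβne ρ₂ σ₂)
    obtain ⟨Q0, hQ0⟩ := Finset.card_eq_one.1 (le_antisymm hc hpos)
    have hswap := poisson_rel_swap F α β ρ₂ σ₂ (hpois ρ₂ σ₂ hρ₂ hσ₂ hco₂)
    have hres := poisson_card_le_one F β α ρ₂ σ₂ hρ₂ hσ₂
      (vdeg_pos F hρ₂ hσ₂ hβnz)
      (le_trans (by omega) (hvall ρ₂ σ₂ hρ₂ hσ₂ hco₂)) hswap Q0.1 Q0.2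
      (by rw [Prod.mk.eta]; exact hQ0)
    omega
  -- singleton faces of β at all strictly intermediate directions
  have hfaceβ : ∀ s t : ℕ, 0 < s → 0 < t →
      ∃ Q : ℕ × ℕ, Eset F β (s*ρ₁+t*ρ₂) (s*σ₁+t*σ₂) = {Q} := by
    intro s t hs ht
    have he1 : 0 < s*ρ₁+t*ρ₂ := by
      have : 0 < s * ρ₁ := Nat.mul_pos hs hρ₁
      omega
    have he2 : 0 < s*σ₁+t*σ₂ := by
      have : 0 < s * σ₁ := Nat.mul_pos hs hσ₁
      omega
    have hg : 0 < Nat.gcd (s*ρ₁+t*ρ₂) (s*σ₁+t*σ₂) := Nat.gcd_pos_of_pos_left _ he1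
    have hd1 : Nat.gcd (s*ρ₁+t*ρ₂) (s*σ₁+t*σ₂) * ((s*ρ₁+t*ρ₂) / Nat.gcd (s*ρ₁+t*ρ₂) (s*σ₁+t*σ₂))
        = s*ρ₁+t*ρ₂ := Nat.mul_div_cancel' (Nat.gcd_dvd_left _ _)
    have hd2 : Nat.gcd (s*ρ₁+t*ρ₂) (s*σ₁+t*σ₂) * ((s*σ₁+t*σ₂) / Nat.gcd (s*ρ₁+t*ρ₂) (s*σ₁+t*σ₂))
        = s*σ₁+t*σ₂ := Nat.mul_div_cancel' (Nat.gcd_dvd_right _ _)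
    have hu1 : 0 < (s*ρ₁+t*ρ₂) / Nat.gcd (s*ρ₁+t*ρ₂) (s*σ₁+t*σ₂) :=
      Nat.div_pos (Nat.le_of_dvd he1 (Nat.gcd_dvd_left _ _)) hg
    have hu2 : 0 < (s*σ₁+t*σ₂) / Nat.gcd (s*ρ₁+t*ρ₂) (s*σ₁+t*σ₂) :=
      Nat.div_pos (Nat.le_of_dvd he2 (Nat.gcd_dvd_right _ _)) hg
    have hcop : Nat.Coprime ((s*ρ₁+t*ρ₂) / Nat.gcd (s*ρ₁+t*ρ₂) (s*σ₁+t*σ₂))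
        ((s*σ₁+t*σ₂) / Nat.gcd (s*ρ₁+t*ρ₂) (s*σ₁+t*σ₂)) :=
      Nat.coprime_div_gcd_div_gcd hg
    have hEα : Eset F α (s*ρ₁+t*ρ₂) (s*σ₁+t*σ₂) = {P} :=
      face_combined F α ρ₁ σ₁ ρ₂ σ₂ P hP1 hP2 hcard_le s t hs ht
    have hEα' : Eset F α ((s*ρ₁+t*ρ₂) / Nat.gcd (s*ρ₁+t*ρ₂) (s*σ₁+t*σ₂))
        ((s*σ₁+t*σ₂) / Nat.gcd (s*ρ₁+t*ρ₂) (s*σ₁+t*σ₂)) = {P} := by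
      have h := Eset_smul F α hg ((s*ρ₁+t*ρ₂) / Nat.gcd (s*ρ₁+t*ρ₂) (s*σ₁+t*σ₂))
        ((s*σ₁+t*σ₂) / Nat.gcd (s*ρ₁+t*ρ₂) (s*σ₁+t*σ₂))
      rw [hd1, hd2] at h
      rw [← h]
      exact hEα
    have hrel := hpois _ _ hu1 hu2 hcop
    have hvβ := vdeg_pos (β := β) F hu1 hu2 hβnz
    have hvα : 1 ≤ vdeg F α ((s*ρ₁+t*ρ₂) / Nat.gcd (s*ρ₁+t*ρ₂) (s*σ₁+t*σ₂))
        ((s*σ₁+t*σ₂) / Nat.gcd (s*ρ₁+t*ρ₂) (s*σ₁+t*σ₂)) :=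
      le_trans (by omega) (hvall _ _ hu1 hu2 hcop)
    have hle1 := poisson_card_le_one F α β _ _ hu1 hu2 hvα hvβ hrel P.1 P.2
      (by rw [Prod.mk.eta]; exact hEα')
    have hnonempty := Eset_nonempty F hβne
      ((s*ρ₁+t*ρ₂) / Nat.gcd (s*ρ₁+t*ρ₂) (s*σ₁+t*σ₂))
      ((s*σ₁+t*σ₂) / Nat.gcd (s*ρ₁+t*ρ₂) (s*σ₁+t*σ₂))
    obtain ⟨Q, hQ⟩ := Finset.card_eq_one.1
      (le_antisymm hle1 (Finset.card_pos.2 hnonempty))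
    refine ⟨Q, ?_⟩
    have h := Eset_smul F β hg ((s*ρ₁+t*ρ₂) / Nat.gcd (s*ρ₁+t*ρ₂) (s*σ₁+t*σ₂))
      ((s*σ₁+t*σ₂) / Nat.gcd (s*ρ₁+t*ρ₂) (s*σ₁+t*σ₂))
    rw [hd1, hd2] at h
    rw [h]
    exact hQ
  -- the sweeping argument
  have hW₁b : ∀ R ∈ β.support, R.1*ρ₁+R.2*σ₁ ≤ vdeg F β ρ₁ σ₁ := fun R hR =>
    Finset.le_sup (f := fun ij : ℕ × ℕ => ij.1 * ρ₁ + ij.2 * σ₁) hR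
  have hW₂b : ∀ R ∈ β.support, R.1*ρ₂+R.2*σ₂ ≤ vdeg F β ρ₂ σ₂ := fun R hR =>
    Finset.le_sup (f := fun ij : ℕ × ℕ => ij.1 * ρ₂ + ij.2 * σ₂) hR
  obtain ⟨N, hNdef⟩ : ∃ N, vdeg F β ρ₁ σ₁ + vdeg F β ρ₂ σ₂ + 2 = N := ⟨_, rfl⟩
  obtain ⟨K, hKdef⟩ : ∃ K, N.factorial = K := ⟨_, rfl⟩
  have hKN : N ≤ K := hKdef ▸ Nat.self_le_factorial N
  have hN2 : 2 ≤ N := by omega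
  have hfact : ∀ D : ℕ, 0 < D → D ≤ vdeg F β ρ₁ σ₁ + vdeg F β ρ₂ σ₂ → D ∣ K :=
    fun D h1 h2 => hKdef ▸ Nat.dvd_factorial h1 (by omega)
  have hchain : ∀ s, 1 ≤ s → s ≤ K - 1 →
      Eset F β (s*ρ₁+(K-s)*ρ₂) (s*σ₁+(K-s)*σ₂) =
      Eset F β (1*ρ₁+(K-1)*ρ₂) (1*σ₁+(K-1)*σ₂) := by
    intro s hs
    induction s, hs using Nat.le_induction with
    | base => intro _; rfl
    | succ n hn ih =>
        intro hn1
        have hKn : 2 ≤ K - n := by omega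
        obtain ⟨Qn, hQn⟩ := hfaceβ n (K-n) (by omega) (by omega)
        obtain ⟨Qn1, hQn1⟩ := hfaceβ (n+1) (K-(n+1)) (by omega) (by omega)
        have hQn1' : Eset F β ((n+1)*ρ₁+((K-n)-1)*ρ₂) ((n+1)*σ₁+((K-n)-1)*σ₂) = {Qn1} := by
          rw [show (K-n)-1 = K-(n+1) from by omega]
          exact hQn1
        have hstep := chain_step F β ρ₁ σ₁ ρ₂ σ₂ n (K-n) K hn hKn (by omega)
          (vdeg F β ρ₁ σ₁) (vdeg F β ρ₂ σ₂) hW₁b hW₂b hfact Qn Qn1 hQn hQn1'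
        rw [hQn1, ← hstep, ← hQn]
        exact ih (by omega)
  have hK2 : 2 ≤ K := by omega
  obtain ⟨Q, hQ1⟩ := hfaceβ 1 (K-1) one_pos (by omega)
  have hQmem2 : Q ∈ Eset F β ρ₂ σ₂ := by
    have hQ1' : Eset F β ((K-1)*ρ₂+1*ρ₁) ((K-1)*σ₂+1*σ₁) = {Q} := by
      rw [show (K-1)*ρ₂+1*ρ₁ = 1*ρ₁+(K-1)*ρ₂ from by ring,
        show (K-1)*σ₂+1*σ₁ = 1*σ₁+(K-1)*σ₂ from by ring]
      exact hQ1
    exact face_endpoint F β ρ₂ σ₂ ρ₁ σ₁ (K-1) 1 hβne Q hQ1' (by omega)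
  have hQK1 : Eset F β ((K-1)*ρ₁+1*ρ₂) ((K-1)*σ₁+1*σ₂) = {Q} := by
    have h := hchain (K-1) (by omega) le_rfl
    rw [show K - (K-1) = 1 from by omega] at h
    rw [h]
    exact hQ1
  have hQmem1 : Q ∈ Eset F β ρ₁ σ₁ :=
    face_endpoint F β ρ₁ σ₁ ρ₂ σ₂ (K-1) 1 hβne Q hQK1 (by omega)
  refine ⟨hcon1, hcon2, le_antisymm (inter_card_le_one F β ρ₁ σ₁ ρ₂ σ₂ hσ₁ hne) ?_⟩
  exact Finset.card_pos.2 ⟨Q, Finset.mem_inter.2 ⟨hQmem1, hQmem2⟩⟩
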